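/- Let p, q > 1 be relatively prime integers and n ≥ max(p,q). Then H^d(n,p,q) = min over 0 ≤ l ≤ n−1 of (G(l,p,q) + G(n−l−1,p,q)), where G(n,p,q) = ⌊n/p⌋ + ⌊n/q⌋ − 2⌊n/(pq)⌋. -/

import Mathlib

/-- A `(p,q)`-special partial word over `Option Bool` (`none` = hole, `some true` = 'b',
`some false` = 'a'): there is a position `l` such that `S[i] = 'b'` if `p ∣ (l-i)` and
`q ∣ (l-i)`, `S[i] = 'a'` if neither divides `l-i`, and `S[i] = ◊` otherwise. -/
def IsSpecial (S : List (Option Bool)) (p q : ℕ) : Prop :=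
  ∃ l < S.length, ∀ (i : ℕ) (h : i < S.length),
    S.get ⟨i, h⟩ =
      if (p : ℤ) ∣ ((l : ℤ) - i) then
        (if (q : ℤ) ∣ ((l : ℤ) - i) then some true else none)
      else
        (if (q : ℤ) ∣ ((l : ℤ) - i) then none else some false)

/-- `G(n,p,q) = ⌊n/p⌋ + ⌊n/q⌋ − 2⌊n/(pq)⌋`. -/
def Gfun (n p q : ℕ) : ℕ := n / p + n / q - 2 * (n / (p * q))

/-- auxiliary: the value at position i of the canonical special word -/
def wordFun (p q l i : ℕ) : Option Bool :=
  if (p : ℤ) ∣ ((l : ℤ) - i) then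
    (if (q : ℤ) ∣ ((l : ℤ) - i) then some true else none)
  else
    (if (q : ℤ) ∣ ((l : ℤ) - i) then none else some false)

lemma wordFun_eq_none (p q l i : ℕ) :
    wordFun p q l i = none ↔
      (((p : ℤ) ∣ ((l : ℤ) - i) ∧ ¬ (q : ℤ) ∣ ((l : ℤ) - i)) ∨
       ((q : ℤ) ∣ ((l : ℤ) - i) ∧ ¬ (p : ℤ) ∣ ((l : ℤ) - i))) := by
  unfold wordFun
  split_ifs with h1 h2 h2 <;> simp_all

lemma cardIoc (p q l : ℕ) (hp : 0 < p) (hq : 0 < q) (hcop : Nat.Coprime p q) :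
    ((Finset.Ioc 0 l).filter
      (fun j => (p ∣ j ∧ ¬ q ∣ j) ∨ (q ∣ j ∧ ¬ p ∣ j))).card = Gfun l p q := by
  have hsplit : ((Finset.Ioc 0 l).filter
      (fun j => (p ∣ j ∧ ¬ q ∣ j) ∨ (q ∣ j ∧ ¬ p ∣ j))) =
    ((Finset.Ioc 0 l).filter (fun j => p ∣ j ∧ ¬ q ∣ j)) ∪
    ((Finset.Ioc 0 l).filter (fun j => q ∣ j ∧ ¬ p ∣ j)) := by
    rw [← Finset.filter_or]
  have hdisj : Disjoint ((Finset.Ioc 0 l).filter (fun j => p ∣ j ∧ ¬ q ∣ j))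
      ((Finset.Ioc 0 l).filter (fun j => q ∣ j ∧ ¬ p ∣ j)) := by
    rw [Finset.disjoint_filter]
    tauto
  have key : ∀ a b : ℕ, 0 < a → 0 < b → Nat.Coprime a b →
      ((Finset.Ioc 0 l).filter (fun j => a ∣ j ∧ ¬ b ∣ j)).card = l / a - l / (a * b) := by
    intro a b ha hb hab
    have h1 : ((Finset.Ioc 0 l).filter (fun j => a ∣ j ∧ ¬ b ∣ j)) =
        ((Finset.Ioc 0 l).filter (fun j => a ∣ j)) \
        ((Finset.Ioc 0 l).filter (fun j => a * b ∣ j)) := by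
      ext j
      simp only [Finset.mem_filter, Finset.mem_sdiff, not_and]
      constructor
      · rintro ⟨hj, hdvd, hnd⟩
        exact ⟨⟨hj, hdvd⟩, fun _ hab' => hnd (dvd_trans (Dvd.intro_left a rfl) hab')⟩
      · rintro ⟨⟨hj, hdvd⟩, hnd⟩
        refine ⟨hj, hdvd, fun hbd => hnd hj (hab.mul_dvd_of_dvd_of_dvd hdvd hbd)⟩
    rw [h1, Finset.card_sdiff_of_subset, Nat.Ioc_filter_dvd_card_eq_div, Nat.Ioc_filter_dvd_card_eq_div]
    intro j hj
    simp only [Finset.mem_filter] at hj ⊢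
    exact ⟨hj.1, dvd_trans (Dvd.intro b rfl) hj.2⟩
  rw [hsplit, Finset.card_union_of_disjoint hdisj, key p q hp hq hcop,
    key q p hq hp hcop.symm, mul_comm q p]
  have h1 : l / (p * q) ≤ l / p := by
    rw [← Nat.div_div_eq_div_mul]; exact Nat.div_le_self _ _
  have h2 : l / (p * q) ≤ l / q := by
    rw [mul_comm, ← Nat.div_div_eq_div_mul]; exact Nat.div_le_self _ _
  unfold Gfun
  omega

lemma count_canonical (p q l n : ℕ) (hp : 0 < p) (hq : 0 < q) (hcop : Nat.Coprime p q)
    (hl : l < n) :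
    ((List.range n).map (wordFun p q l)).count none
      = Gfun l p q + Gfun (n - l - 1) p q := by
  have h0 : ((List.range n).map (wordFun p q l)).count none
      = (List.range n).countP (fun i => wordFun p q l i == none) := by
    rw [List.count, List.countP_map]; rfl
  rw [h0]
  have h1 : (List.range n).countP (fun i => wordFun p q l i == none)
      = ((Finset.range n).filter (fun i => wordFun p q l i = none)).card := by
    simp [List.countP_eq_length_filter, Finset.card, Finset.range, Multiset.range,
      Finset.filter]
    congr 1
    apply List.filter_congr
    intro i _
    rw [Bool.eq_iff_iff]
    simp [beq_iff_eq]
  rw [h1]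
  have hrange : Finset.range n = Finset.Ico 0 (l+1) ∪ Finset.Ico (l+1) n := by
    rw [Finset.Ico_union_Ico_eq_Ico (by omega) (by omega), Finset.range_eq_Ico]
  rw [hrange, Finset.filter_union, Finset.card_union_of_disjoint
    (Finset.disjoint_filter_filter (Finset.Ico_disjoint_Ico_consecutive 0 (l+1) n))]
  have hc1 : ((Finset.Ico 0 (l+1)).filter (fun i => wordFun p q l i = none)).card
      = ((Finset.Ioc 0 l).filter
          (fun j => (p ∣ j ∧ ¬ q ∣ j) ∨ (q ∣ j ∧ ¬ p ∣ j))).card := by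
    apply Finset.card_nbij' (fun i => l - i) (fun j => l - j)
    · intro i hi
      simp only [Finset.mem_coe, Finset.mem_filter, Finset.mem_Ico, wordFun_eq_none] at hi
      have hil : i ≤ l := by omega
      have hcast : (l : ℤ) - i = ((l - i : ℕ) : ℤ) := by omega
      rw [hcast] at hi
      simp only [Int.natCast_dvd_natCast] at hi
      simp only [Finset.mem_coe, Finset.mem_filter, Finset.mem_Ioc]
      have hpos : 0 < l - i := by
        rcases Nat.eq_or_lt_of_le hil with h | h
        · exfalso; subst h; simp at hi
        · omega
      exact ⟨⟨hpos, by omega⟩, hi.2⟩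
    · intro j hj
      simp only [Finset.mem_coe, Finset.mem_filter, Finset.mem_Ioc] at hj
      have hjl : 0 < j ∧ j ≤ l := hj.1
      simp only [Finset.mem_coe, Finset.mem_filter, Finset.mem_Ico, wordFun_eq_none]
      have hcast : (l : ℤ) - (l - j : ℕ) = (j : ℤ) := by omega
      rw [hcast]
      simp only [Int.natCast_dvd_natCast]
      exact ⟨by omega, hj.2⟩
    · intro i hi
      simp only [Finset.mem_coe, Finset.mem_filter, Finset.mem_Ico] at hi
      beta_reduce; omega
    · intro j hj
      simp only [Finset.mem_coe, Finset.mem_filter, Finset.mem_Ioc] at hj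
      beta_reduce; omega
  have hc2 : ((Finset.Ico (l+1) n).filter (fun i => wordFun p q l i = none)).card
      = ((Finset.Ioc 0 (n - l - 1)).filter
          (fun j => (p ∣ j ∧ ¬ q ∣ j) ∨ (q ∣ j ∧ ¬ p ∣ j))).card := by
    apply Finset.card_nbij' (fun i => i - l) (fun j => j + l)
    · intro i hi
      simp only [Finset.mem_coe, Finset.mem_filter, Finset.mem_Ico, wordFun_eq_none] at hi
      have hil : l < i := hi.1.1
      have hcast : (l : ℤ) - i = -((i - l : ℕ) : ℤ) := by omega
      rw [hcast] at hi
      simp only [dvd_neg, Int.natCast_dvd_natCast] at hi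
      simp only [Finset.mem_coe, Finset.mem_filter, Finset.mem_Ioc]
      exact ⟨⟨by omega, by omega⟩, hi.2⟩
    · intro j hj
      simp only [Finset.mem_coe, Finset.mem_filter, Finset.mem_Ioc] at hj
      simp only [Finset.mem_coe, Finset.mem_filter, Finset.mem_Ico, wordFun_eq_none]
      have hcast : (l : ℤ) - (j + l : ℕ) = -(j : ℤ) := by push_cast; ring
      rw [hcast]
      simp only [dvd_neg, Int.natCast_dvd_natCast]
      exact ⟨by omega, hj.2⟩
    · intro i hi
      simp only [Finset.mem_coe, Finset.mem_filter, Finset.mem_Ico] at hi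
      beta_reduce; omega
    · intro j hj
      simp only [Finset.mem_coe, Finset.mem_filter, Finset.mem_Ioc] at hj
      beta_reduce; omega
  rw [hc1, hc2, cardIoc p q l hp hq hcop, cardIoc p q (n - l - 1) hp hq hcop]

/-- `H^d(n,p,q)`, the minimum number of holes in a `(p,q)`-special partial word
of length `n`, equals `min_{0 ≤ l ≤ n-1} (G(l,p,q) + G(n-l-1,p,q))`. -/
theorem Hd_formula (p q n : ℕ) (hp : 1 < p) (hq : 1 < q) (hcop : Nat.Coprime p q)
    (hn : max p q ≤ n) :
    sInf {h : ℕ | ∃ S : List (Option Bool),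
        IsSpecial S p q ∧ S.length = n ∧ S.count none = h} =
      sInf {v : ℕ | ∃ l < n, v = Gfun l p q + Gfun (n - l - 1) p q} := by
  congr 1
  ext h
  simp only [Set.mem_setOf_eq]
  constructor
  · rintro ⟨S, ⟨l, hl, hspec⟩, hlen, hcount⟩
    refine ⟨l, by omega, ?_⟩
    have hS : S = (List.range n).map (wordFun p q l) := by
      apply List.ext_get
      · simp [hlen]
      · intro i h1 h2
        rw [hspec i h1]
        simp [wordFun, hlen]
    rw [hS] at hcount
    rw [← hcount, count_canonical p q l n (by omega) (by omega) hcop (by omega)]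
  · rintro ⟨l, hl, rfl⟩
    refine ⟨(List.range n).map (wordFun p q l), ⟨l, by simpa using hl, ?_⟩,
      by simp, count_canonical p q l n (by omega) (by omega) hcop hl⟩
    intro i hi
    simp [wordFun]
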